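/- Let Δ be a pure d-dimensional simplicial complex and let Γ be any partition extender of Δ. Then for all 0 ≤ i ≤ d+1, h_i(Δ) equals the number of Boolean intervals with bottom element of cardinality i in any partitioning of the face poset of Γ, minus the number of Boolean intervals with bottom element of cardinality i in any partitioning of the face poset of the relative complex (Γ,Δ). -/
import Mathlib


/-- A simplicial complex on vertex set `ℕ`: a finite collection of finite sets of
vertices (faces) closed under taking subsets. -/
def IsComplex (Δ : Finset (Finset ℕ)) : Prop :=
  ∀ σ ∈ Δ, ∀ τ ⊆ σ, τ ∈ Δ

/-- `F` is a facet (maximal face) of `Δ`. -/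
def IsFacet (Δ : Finset (Finset ℕ)) (F : Finset ℕ) : Prop :=
  F ∈ Δ ∧ ∀ G ∈ Δ, F ⊆ G → F = G

/-- `Δ` is a pure `d`-dimensional complex: it is nonempty and every facet has
cardinality `d + 1` (i.e. dimension `d`). -/
def PureDim (Δ : Finset (Finset ℕ)) (d : ℤ) : Prop :=
  Δ.Nonempty ∧ ∀ F : Finset ℕ, IsFacet Δ F → (F.card : ℤ) = d + 1

/-- `S` is a partitioning of the set of faces `P` (ordered by inclusion) into Boolean
intervals topped by maximal elements of `P`.  Each pair `p ∈ S` represents the interval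
`[p.1, p.2]`; the intervals must be full Boolean intervals contained in `P`
(second condition), their tops must be maximal elements of `P` (first condition),
and every element of `P` must lie in exactly one interval (third condition). -/
def IsPartitioning (S : Finset (Finset ℕ × Finset ℕ)) (P : Finset (Finset ℕ)) : Prop :=
  (∀ p ∈ S, p.1 ⊆ p.2 ∧ p.2 ∈ P ∧ ∀ c ∈ P, p.2 ⊆ c → p.2 = c) ∧
  (∀ p ∈ S, ∀ e : Finset ℕ, p.1 ⊆ e → e ⊆ p.2 → e ∈ P) ∧
  (∀ e ∈ P, ∃! p : Finset ℕ × Finset ℕ, p ∈ S ∧ p.1 ⊆ e ∧ e ⊆ p.2)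

/-- A set of faces, ordered by inclusion, is partitionable if it admits a partitioning
into Boolean intervals whose maximum elements are maximal elements. -/
def Partitionable (P : Finset (Finset ℕ)) : Prop :=
  ∃ S : Finset (Finset ℕ × Finset ℕ), IsPartitioning S P

/-- The relative complex `(Δ, ⟨F⟩)`: the faces of `Δ` not contained in `F`. -/
def relF (Δ : Finset (Finset ℕ)) (F : Finset ℕ) : Finset (Finset ℕ) :=
  Δ.filter (fun τ => ¬ τ ⊆ F)

/-- `fcount P j` is the number of faces of `P` of cardinality `j`
(i.e. `f_{j-1}`, the number of `(j-1)`-dimensional faces). -/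
def fcount (P : Finset (Finset ℕ)) (j : ℕ) : ℕ :=
  (P.filter (fun σ => σ.card = j)).card

/-- `P` has dimension `d`: it is nonempty and its largest face has cardinality `d + 1`. -/
def dimIs (P : Finset (Finset ℕ)) (d : ℤ) : Prop :=
  P.Nonempty ∧ ((P.sup Finset.card : ℕ) : ℤ) = d + 1

open Polynomial in
/-- The `h`-vector of a `d`-dimensional (relative) complex `P`, defined by the polynomial
identity `∑_{i=0}^{d+1} f_{i-1} (x-1)^{d-i+1} = ∑_{i=0}^{d+1} h_i x^{d-i+1}`:
`hvec P d i` is the coefficient of `x^{d+1-i}` in `∑_{j=0}^{d+1} f_{j-1} (x-1)^{d+1-j}`. -/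
noncomputable def hvec (P : Finset (Finset ℕ)) (d i : ℕ) : ℤ :=
  (∑ j ∈ Finset.range (d + 2),
      (fcount P j : ℤ) • ((X - 1 : Polynomial ℤ) ^ (d + 1 - j))).coeff (d + 1 - i)

section Aux
open Polynomial

lemma sum_powerset_sub' (t : Finset ℕ) :
    ∑ s ∈ t.powerset, (X - 1 : Polynomial ℤ) ^ (t.card - s.card) = X ^ t.card := by
  have h := Finset.prod_add (fun _ : ℕ => (1 : Polynomial ℤ)) (fun _ => (X - 1 : Polynomial ℤ)) t
  simp only [Finset.prod_const, one_pow, one_mul] at h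
  have h1 : (1 + (X - 1) : Polynomial ℤ) = X := by ring
  rw [h1] at h
  rw [h]
  apply Finset.sum_congr rfl
  intro s hs
  rw [Finset.card_sdiff_of_subset (Finset.mem_powerset.mp hs)]

lemma icc_sum' (d : ℕ) (σ τ : Finset ℕ) (hst : σ ⊆ τ) (hcard : τ.card = d + 1) :
    ∑ e ∈ Finset.Icc σ τ, (X - 1 : Polynomial ℤ) ^ (d + 1 - e.card)
      = X ^ (d + 1 - σ.card) := by
  have ht : (τ \ σ).card = d + 1 - σ.card := by
    rw [Finset.card_sdiff_of_subset hst, hcard]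
  rw [← ht, ← sum_powerset_sub' (τ \ σ)]
  apply Finset.sum_bij' (fun e _ => e \ σ) (fun s _ => s ∪ σ)
  · intro e he
    rw [Finset.mem_Icc] at he
    exact Finset.mem_powerset.mpr (Finset.sdiff_subset_sdiff he.2 (subset_refl σ))
  · intro s hs
    rw [Finset.mem_powerset] at hs
    rw [Finset.mem_Icc]
    constructor
    · exact Finset.subset_union_right
    · exact Finset.union_subset (hs.trans Finset.sdiff_subset) hst
  · intro e he
    rw [Finset.mem_Icc] at he
    rw [Finset.sdiff_union_self_eq_union, Finset.union_eq_left.mpr he.1]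
  · intro s hs
    rw [Finset.mem_powerset] at hs
    rw [Finset.union_sdiff_cancel_right]
    exact Finset.disjoint_of_subset_left hs Finset.sdiff_disjoint
  · intro e he
    rw [Finset.mem_Icc] at he
    have h1 : σ.card ≤ e.card := Finset.card_le_card he.1
    have h2 : e.card ≤ τ.card := Finset.card_le_card he.2
    have h3 : (e \ σ).card = e.card - σ.card := Finset.card_sdiff_of_subset he.1
    rw [ht, h3]
    congr 1
    omega

lemma key_partition (d : ℕ) (P : Finset (Finset ℕ)) (S : Finset (Finset ℕ × Finset ℕ))
    (hS : IsPartitioning S P) (htop : ∀ p ∈ S, p.2.card = d + 1) :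
    (∑ j ∈ Finset.range (d + 2), (fcount P j : ℤ) • ((X - 1 : Polynomial ℤ) ^ (d + 1 - j)))
      = ∑ p ∈ S, (X : Polynomial ℤ) ^ (d + 1 - p.1.card) := by
  obtain ⟨h1, h2, h3⟩ := hS
  have hle : ∀ e ∈ P, e.card ≤ d + 1 := by
    intro e he
    obtain ⟨p, ⟨hp, _, hep⟩, _⟩ := h3 e he
    calc e.card ≤ p.2.card := Finset.card_le_card hep
    _ = d + 1 := htop p hp
  have lhs : (∑ j ∈ Finset.range (d + 2), (fcount P j : ℤ) • ((X - 1 : Polynomial ℤ) ^ (d + 1 - j)))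
      = ∑ e ∈ P, (X - 1 : Polynomial ℤ) ^ (d + 1 - e.card) := by
    rw [← Finset.sum_fiberwise_of_maps_to (g := fun e : Finset ℕ => e.card)
      (t := Finset.range (d + 2)) (fun e he => Finset.mem_range.mpr (Nat.lt_succ_of_le (hle e he)))]
    apply Finset.sum_congr rfl
    intro j _
    rw [Finset.sum_congr rfl (fun e he => by
      rw [(Finset.mem_filter.mp he).2]), Finset.sum_const, fcount, natCast_zsmul]
  rw [lhs]
  have hP : P = S.biUnion (fun p => Finset.Icc p.1 p.2) := by
    apply Finset.Subset.antisymm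
    · intro e he
      obtain ⟨p, ⟨hp, hpe, hep⟩, _⟩ := h3 e he
      exact Finset.mem_biUnion.mpr ⟨p, hp, Finset.mem_Icc.mpr ⟨hpe, hep⟩⟩
    · intro e he
      obtain ⟨p, hp, hpe⟩ := Finset.mem_biUnion.mp he
      rw [Finset.mem_Icc] at hpe
      exact h2 p hp e hpe.1 hpe.2
  rw [hP, Finset.sum_biUnion]
  · apply Finset.sum_congr rfl
    intro p hp
    exact icc_sum' d p.1 p.2 (h1 p hp).1 (htop p hp)
  · intro p hp q hq hpq
    simp only [Function.onFun]
    rw [Finset.disjoint_left]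
    intro e hep heq
    rw [Finset.mem_Icc] at hep heq
    have heP : e ∈ P := h2 p hp e hep.1 hep.2
    obtain ⟨r, _, hu⟩ := h3 e heP
    exact hpq ((hu p ⟨hp, hep⟩).trans (hu q ⟨hq, heq⟩).symm)

lemma hvec_eq_count (d i : ℕ) (hi : i ≤ d + 1) (P : Finset (Finset ℕ))
    (S : Finset (Finset ℕ × Finset ℕ)) (hS : IsPartitioning S P)
    (htop : ∀ p ∈ S, p.2.card = d + 1) :
    hvec P d i = ((S.filter (fun p => p.1.card = i)).card : ℤ) := by
  unfold hvec
  rw [key_partition d P S hS htop, Polynomial.finset_sum_coeff]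
  have : ∀ p ∈ S, ((X : Polynomial ℤ) ^ (d + 1 - p.1.card)).coeff (d + 1 - i)
      = if p.1.card = i then 1 else 0 := by
    intro p hp
    rw [Polynomial.coeff_X_pow]
    have h1 : p.1.card ≤ d + 1 := by
      calc p.1.card ≤ p.2.card := Finset.card_le_card (hS.1 p hp).1
      _ = d + 1 := htop p hp
    congr 1
    simp only [eq_iff_iff]
    omega
  rw [Finset.sum_congr rfl this, Finset.sum_boole]

end Aux

/-- If `Δ` is a pure `d`-dimensional complex and `Γ` is any partition extender of `Δ`,
then for all `0 ≤ i ≤ d+1`, `h_i(Δ)` equals the number of Boolean intervals with bottom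
element of cardinality `i` in any partitioning of `Γ`, minus the number of Boolean
intervals with bottom element of cardinality `i` in any partitioning of the relative
complex `(Γ,Δ)`. -/
theorem h_vector_from_partition_extender (d : ℕ) (Δ Γ : Finset (Finset ℕ))
    (hΔ : IsComplex Δ) (hΔp : PureDim Δ (d : ℤ))
    (hΓ : IsComplex Γ) (hΓp : PureDim Γ (d : ℤ)) (hsub : Δ ⊆ Γ)
    (S T : Finset (Finset ℕ × Finset ℕ))
    (hS : IsPartitioning S Γ) (hT : IsPartitioning T (Γ \ Δ))
    (i : ℕ) (hi : i ≤ d + 1) :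
    hvec Δ d i =
      ((S.filter (fun p => p.1.card = i)).card : ℤ) -
        ((T.filter (fun p => p.1.card = i)).card : ℤ) := by
  -- tops of S are facets of Γ
  have htopS : ∀ p ∈ S, p.2.card = d + 1 := by
    intro p hp
    have hf : IsFacet Γ p.2 := ⟨(hS.1 p hp).2.1, (hS.1 p hp).2.2⟩
    exact_mod_cast hΓp.2 p.2 hf
  have htopT : ∀ p ∈ T, p.2.card = d + 1 := by
    intro p hp
    have hmem : p.2 ∈ Γ \ Δ := (hT.1 p hp).2.1
    have hf : IsFacet Γ p.2 := by
      refine ⟨(Finset.mem_sdiff.mp hmem).1, ?_⟩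
      intro G hG hsubG
      by_cases hGΔ : G ∈ Δ
      · exact absurd (hΔ G hGΔ p.2 hsubG) (Finset.mem_sdiff.mp hmem).2
      · exact (hT.1 p hp).2.2 G (Finset.mem_sdiff.mpr ⟨hG, hGΔ⟩) hsubG
    exact_mod_cast hΓp.2 p.2 hf
  have hSc := hvec_eq_count d i hi Γ S hS htopS
  have hTc := hvec_eq_count d i hi (Γ \ Δ) T hT htopT
  have hfc : ∀ j, (fcount Γ j : ℤ) = (fcount Δ j : ℤ) + (fcount (Γ \ Δ) j : ℤ) := by
    intro j
    have : fcount Γ j = fcount Δ j + fcount (Γ \ Δ) j := by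
      unfold fcount
      rw [← Finset.card_union_of_disjoint
        (Finset.disjoint_filter_filter Finset.disjoint_sdiff),
        ← Finset.filter_union, Finset.union_sdiff_of_subset hsub]
    exact_mod_cast this
  have hadd : hvec Γ d i = hvec Δ d i + hvec (Γ \ Δ) d i := by
    unfold hvec
    rw [← Polynomial.coeff_add, ← Finset.sum_add_distrib]
    congr 1
    apply Finset.sum_congr rfl
    intro j _
    rw [hfc j, add_smul]
  rw [← hSc, ← hTc] at *
  linarith [hadd]
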